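/- Let Σ = Σ_1 ∪ ⋯ ∪ Σ_k be a partition of the alphabet into pairwise disjoint nonempty blocks and let L ⊆ Σ* be closed under the associated partial commutation. If u, v ∈ Σ_i* and u ≡_L v, then u and v are Nerode-equivalent with respect to the projection π_{Σ_i}(L), i.e., for all x ∈ Σ_i*: ux ∈ π_{Σ_i}(L) ↔ vx ∈ π_{Σ_i}(L). (Equivalently, [u]_{≡_L} ∩ Σ_i* ⊆ [u]_{≡_{π_{Σ_i}(L)}} ∩ Σ_i*.) -/

import Mathlib

/-- The Nerode right-congruence of a language `L`: `u ≡_L v` iff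
for all words `x`, `u ++ x ∈ L ↔ v ++ x ∈ L`. -/
def NerodeEq {α : Type*} (L : Set (List α)) (u v : List α) : Prop :=
  ∀ x : List α, u ++ x ∈ L ↔ v ++ x ∈ L

/-- The Nerode right-congruence as a setoid on words. -/
def nerodeSetoid {α : Type*} (L : Set (List α)) : Setoid (List α) where
  r := NerodeEq L
  iseqv := ⟨fun _ _ => Iff.rfl, fun h x => (h x).symm, fun h1 h2 x => (h1 x).trans (h2 x)⟩

/-- A language is regular iff its Nerode right-congruence has finitely many classes. -/
def RegularLang {α : Type*} (L : Set (List α)) : Prop :=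
  Finite (Quotient (nerodeSetoid L))

/-- The state complexity of `L`: the number of Nerode right-congruence classes. -/
noncomputable def sc {α : Type*} (L : Set (List α)) : ℕ :=
  Nat.card (Quotient (nerodeSetoid L))

/-- A language is commutative if membership only depends on the number of
occurrences of each letter. -/
def CommutativeLang {α : Type*} [DecidableEq α] (L : Set (List α)) : Prop :=
  ∀ u v : List α, (∀ x : α, u.count x = v.count x) → (u ∈ L ↔ v ∈ L)

/-- A (commutative) language has a product-form minimal automaton iff for all words
`u, v`: `u ≡_L v` holds if and only if `x^{|u|_x} ≡_L x^{|v|_x}` for every letter `x`. -/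
def HasProductForm {α : Type*} [DecidableEq α] (L : Set (List α)) : Prop :=
  ∀ u v : List α,
    NerodeEq L u v ↔
      ∀ x : α, NerodeEq L (List.replicate (u.count x) x) (List.replicate (v.count x) x)

/-- With a partition of the alphabet encoded by a coloring `c : α → Fin k`
(block `Σ_i = c⁻¹(i)`), `projC c i w` is the projection `π_{Σ_i}(w)`. -/
def projC {α : Type*} {k : ℕ} (c : α → Fin k) (i : Fin k) (w : List α) : List α :=
  w.filter (fun x => c x = i)

/-- `L` is closed under the partial commutation associated with the partition
encoded by `c : α → Fin k`: letters in distinct blocks commute. -/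
def PartialCommClosed {α : Type*} {k : ℕ} (c : α → Fin k) (L : Set (List α)) : Prop :=
  ∀ x y : α, c x ≠ c y → ∀ u v : List α,
    (u ++ x :: y :: v ∈ L ↔ u ++ y :: x :: v ∈ L)


lemma swap_front {α : Type*} {k : ℕ} {c : α → Fin k} {L : Set (List α)}
    (hL : PartialCommClosed c L) (a : α) :
    ∀ (p : List α), (∀ b ∈ p, c b ≠ c a) → ∀ w q,
      (w ++ (p ++ a :: q) ∈ L ↔ w ++ (a :: (p ++ q)) ∈ L) := by
  intro p
  induction p with
  | nil => intro _ w q; simp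
  | cons b p ih =>
    intro hp w q
    have h1 : w ++ (b :: p ++ a :: q) = (w ++ [b]) ++ (p ++ a :: q) := by simp
    have h2 : (w ++ [b]) ++ (a :: (p ++ q)) = w ++ (b :: a :: (p ++ q)) := by simp
    rw [h1, ih (fun x hx => hp x (List.mem_cons_of_mem _ hx)) (w ++ [b]) q, h2]
    have := hL b a (hp b List.mem_cons_self) w (p ++ q)
    simpa using this

lemma trace_mem {α : Type*} {k : ℕ} {c : α → Fin k} {L : Set (List α)}
    (hL : PartialCommClosed c L) :
    ∀ n (z z' : List α), z.length ≤ n → (∀ j, projC c j z = projC c j z') →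
      ∀ w, (w ++ z ∈ L ↔ w ++ z' ∈ L) := by
  intro n
  induction n with
  | zero =>
    intro z z' hlen hproj w
    have hz : z = [] := List.length_eq_zero_iff.mp (Nat.le_zero.mp hlen)
    subst hz
    have hz' : z' = [] := by
      cases z' with
      | nil => rfl
      | cons a t =>
        have := hproj (c a)
        simp [projC] at this
    subst hz'; rfl
  | succ n ih =>
    intro z z' hlen hproj w
    cases z with
    | nil =>
      have hz' : z' = [] := by
        cases z' with
        | nil => rfl
        | cons a t =>
          have := hproj (c a)
          simp [projC] at this
      subst hz'; rfl
    | cons a t =>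
      have h0 : projC c (c a) z' = a :: projC c (c a) t := by
        rw [← hproj (c a)]; simp [projC]
      obtain ⟨p, q, hz', hp, -, hq⟩ := List.filter_eq_cons_iff.mp h0
      -- z' = p ++ a :: q, letters of p have color ≠ c a
      have hp' : ∀ b ∈ p, c b ≠ c a := by
        intro b hb h
        have := hp b hb
        simp [h] at this
      have hproj' : ∀ j, projC c j t = projC c j (p ++ q) := by
        intro j
        by_cases hj : j = c a
        · subst hj
          have hpnil : List.filter (fun x => decide (c x = c a)) p = [] := by
            rw [List.filter_eq_nil_iff]
            intro b hb
            simpa using hp' b hb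
          have hq' : List.filter (fun x => decide (c x = c a)) q
              = List.filter (fun x => decide (c x = c a)) t := hq
          simp only [projC, List.filter_append]
          rw [hpnil, List.nil_append, hq']
        · have := hproj j
          rw [hz'] at this
          simp only [projC, List.filter_cons, List.filter_append] at this ⊢
          have ha : (decide (c a = j)) = false := by
            simp only [decide_eq_false_iff_not]
            exact fun h => hj h.symm
          rw [ha] at this
          simpa [ha] using this
      calc w ++ (a :: t) ∈ L
          ↔ (w ++ [a]) ++ t ∈ L := by simp
        _ ↔ (w ++ [a]) ++ (p ++ q) ∈ L := ih t (p ++ q) (Nat.le_of_succ_le_succ hlen) hproj' (w ++ [a])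
        _ ↔ w ++ (a :: (p ++ q)) ∈ L := by simp
        _ ↔ w ++ (p ++ a :: q) ∈ L := (swap_front hL a p hp' w q).symm
        _ ↔ w ++ z' ∈ L := by rw [hz']


lemma key_dir {α : Type*} {k : ℕ} {c : α → Fin k} {L : Set (List α)}
    (hL : PartialCommClosed c L) (i : Fin k) (u v x : List α)
    (hu : ∀ y ∈ u, c y = i) (hv : ∀ y ∈ v, c y = i) (hx : ∀ y ∈ x, c y = i)
    (huv : NerodeEq L u v) :
    u ++ x ∈ projC c i '' L → v ++ x ∈ projC c i '' L := by
  rintro ⟨z, hz, hproj⟩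
  set r := z.filter (fun b => decide (¬ c b = i)) with hr
  have hrcol : ∀ b ∈ r, ¬ c b = i := by
    intro b hb
    have := List.of_mem_filter hb
    simpa using this
  have hiu : List.filter (fun y => decide (c y = i)) u = u :=
    List.filter_eq_self.mpr (fun a ha => by simpa using hu a ha)
  have hix : List.filter (fun y => decide (c y = i)) x = x :=
    List.filter_eq_self.mpr (fun a ha => by simpa using hx a ha)
  have hiv : List.filter (fun y => decide (c y = i)) v = v :=
    List.filter_eq_self.mpr (fun a ha => by simpa using hv a ha)
  have hir : List.filter (fun y => decide (c y = i)) r = [] :=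
    List.filter_eq_nil_iff.mpr (fun a ha => by simpa using hrcol a ha)
  have hprojs : ∀ j, projC c j z = projC c j (u ++ (x ++ r)) := by
    intro j
    by_cases hj : j = i
    · subst hj
      simp only [projC, List.filter_append, hiu, hix, hir, List.append_nil]
      exact hproj
    · have hju : List.filter (fun y => decide (c y = j)) u = [] :=
        List.filter_eq_nil_iff.mpr (fun a ha => by simp [hu a ha, hj, Ne.symm]
        )
      have hjx : List.filter (fun y => decide (c y = j)) x = [] :=
        List.filter_eq_nil_iff.mpr (fun a ha => by simp [hx a ha, hj, Ne.symm])
      simp only [projC, List.filter_append, hju, hjx, List.nil_append, hr]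
      rw [List.filter_filter]
      apply List.filter_congr
      intro a _
      by_cases hca : c a = j
      · simp [hca, hj]
      · simp [hca]
  have h1 : u ++ (x ++ r) ∈ L := by
    have := trace_mem hL z.length z (u ++ (x ++ r)) le_rfl hprojs []
    simpa using this.mp hz
  have h2 : v ++ (x ++ r) ∈ L := (huv (x ++ r)).mp h1
  refine ⟨v ++ (x ++ r), h2, ?_⟩
  simp only [projC, List.filter_append, hiv, hix, hir, List.append_nil]

/-- If `L` is closed under the partial commutation associated with the partition
`Σ = Σ_1 ∪ ⋯ ∪ Σ_k`, `u, v ∈ Σ_i*` and `u ≡_L v`, then `u` and `v` are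
Nerode-equivalent for `π_{Σ_i}(L)` over the alphabet `Σ_i`. -/
theorem stmt15 {α : Type*} {k : ℕ} (c : α → Fin k) (hsurj : Function.Surjective c)
    (L : Set (List α)) (hL : PartialCommClosed c L) (i : Fin k) (u v : List α)
    (hu : ∀ x ∈ u, c x = i) (hv : ∀ x ∈ v, c x = i) (huv : NerodeEq L u v) :
    ∀ x : List α, (∀ y ∈ x, c y = i) →
      (u ++ x ∈ projC c i '' L ↔ v ++ x ∈ projC c i '' L) := by
  intro x hx
  exact ⟨key_dir hL i u v x hu hv hx huv,
    key_dir hL i v u x hv hu hx (fun y => (huv y).symm)⟩
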